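/- Let H be a linear uniform hypergraph in which every edge has rank r ≥ 3, every edge satisfies R(e) ≤ R for the clique rank, and every vertex satisfies d(x) ≤ R/r + 1. Then for every edge e, the number of triangles with side e satisfies T(e) ≤ (R²/2)(1/r + (r − 1)²/R). -/

import Mathlib

open Finset

variable {V : Type*} [DecidableEq V]

/-- A proper list edge coloring of the hypergraph with edge set `E` from the lists `L`:
each edge gets a color from its list, and two distinct edges get the same color
only if they are disjoint. -/
def IsProperListColoring (E : Finset (Finset V)) (L : Finset V → Finset ℕ)
    (γ : Finset V → ℕ) : Prop :=
  (∀ e ∈ E, γ e ∈ L e) ∧ ∀ e ∈ E, ∀ f ∈ E, e ≠ f → γ e = γ f → Disjoint e f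

/-- `E` is `k`-list-edge-colorable: for every assignment of lists of size `k`
there is a proper list edge coloring. -/
def ListColorable (E : Finset (Finset V)) (k : ℕ) : Prop :=
  ∀ L : Finset V → Finset ℕ, (∀ e ∈ E, (L e).card = k) →
    ∃ γ : Finset V → ℕ, IsProperListColoring E L γ

/-- The list edge chromatic number `q_list`: the least `k` such that `E` is
`k`-list-edge-colorable. -/
noncomputable def qList (E : Finset (Finset V)) : ℕ :=
  sInf {k | ListColorable E k}

/-- The degree of a vertex: the number of edges containing it. -/
def deg (E : Finset (Finset V)) (x : V) : ℕ := (E.filter fun e => x ∈ e).card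

/-- The clique rank of an edge: `R(e) = ∑_{x ∈ e} (d(x) - 1)`. -/
def cliqueRank (E : Finset (Finset V)) (e : Finset V) : ℕ :=
  ∑ x ∈ e, (deg E x - 1)

/-- The clique degree of a vertex: `D(x) = ∑_{e ∋ x} (r(e) - 1)`. -/
def cliqueDeg (E : Finset (Finset V)) (x : V) : ℕ :=
  ∑ e ∈ E.filter (fun e => x ∈ e), (e.card - 1)

/-- A hypergraph is linear if any two distinct edges meet in at most one vertex. -/
def Linear (E : Finset (Finset V)) : Prop :=
  ∀ e ∈ E, ∀ f ∈ E, e ≠ f → (e ∩ f).card ≤ 1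

/-- The number of triangles with side `e`: unordered pairs `{f, g}` of edges
distinct from `e` such that `e, f, g` pairwise intersect. -/
def numTriangles (E : Finset (Finset V)) (e : Finset V) : ℕ :=
  (((E.erase e).powersetCard 2).filter fun p =>
    (∀ f ∈ p, (e ∩ f).Nonempty) ∧ ∀ f ∈ p, ∀ g ∈ p, f ≠ g → (f ∩ g).Nonempty).card

/-- In a linear uniform hypergraph of rank `r ≥ 3` in which every edge has clique
rank at most `R` and every vertex has degree at most `R/r + 1`, every edge `e`
satisfies `T(e) ≤ (R²/2)(1/r + (r - 1)²/R)`. -/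
theorem stmt18 {V : Type*} [DecidableEq V] (E : Finset (Finset V)) (r R : ℕ)
    (hr : 3 ≤ r) (hunif : ∀ e ∈ E, e.card = r) (hlin : Linear E)
    (hR : ∀ e ∈ E, cliqueRank E e ≤ R)
    (hdeg : ∀ x : V, (deg E x : ℝ) ≤ (R : ℝ) / r + 1) :
    ∀ e ∈ E, (numTriangles E e : ℝ) ≤
      (R : ℝ) ^ 2 / 2 * (1 / r + ((r : ℝ) - 1) ^ 2 / R) := by
  intro e he
  classical
  have hrpos : 0 < r := by omega
  have her : e.card = r := hunif e he
  have hene : e.Nonempty := by rw [← card_pos, her]; omega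
  obtain ⟨x₀, hx₀⟩ := hene
  set S : Finset (Finset V) := (E.erase e).filter (fun f => (e ∩ f).Nonempty) with hSdef
  have hSE : ∀ f ∈ S, f ∈ E ∧ f ≠ e ∧ (e ∩ f).Nonempty := by
    intro f hf
    rw [hSdef, mem_filter, mem_erase] at hf
    exact ⟨hf.1.2, hf.1.1, hf.2⟩
  have hSmem : ∀ f, f ∈ E → f ≠ e → (e ∩ f).Nonempty → f ∈ S := by
    intro f h1 h2 h3
    rw [hSdef, mem_filter, mem_erase]
    exact ⟨⟨h2, h1⟩, h3⟩
  have hmeet : ∀ f ∈ S, (e ∩ f).card = 1 := by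
    intro f hf
    obtain ⟨hfE, hfe, hne⟩ := hSE f hf
    exact le_antisymm (hlin e he f hfE (Ne.symm hfe)) (card_pos.mpr hne)
  set m : Finset V → V := fun f => if h : (e ∩ f).Nonempty then h.choose else x₀ with hmdef
  have hm_mem : ∀ f ∈ S, m f ∈ e ∩ f := by
    intro f hf
    obtain ⟨_, _, hne⟩ := hSE f hf
    simp only [hmdef, dif_pos hne]
    exact hne.choose_spec
  have hm_uniq : ∀ f ∈ S, ∀ y ∈ e ∩ f, y = m f := by
    intro f hf y hy
    exact card_le_one.mp (hmeet f hf).le y hy _ (hm_mem f hf)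
  -- fibers of the meeting-vertex map
  have hfibcard : ∀ x ∈ e, (S.filter (fun f => m f = x)).card = deg E x - 1 := by
    intro x hx
    have hfiber : S.filter (fun f => m f = x) = (E.filter (fun f => x ∈ f)).erase e := by
      ext f
      constructor
      · intro hmem
        obtain ⟨hfS, hmf⟩ := mem_filter.mp hmem
        obtain ⟨hfE, hfe, _⟩ := hSE f hfS
        have hmm := hm_mem f hfS
        rw [hmf] at hmm
        exact mem_erase.mpr ⟨hfe, mem_filter.mpr ⟨hfE, (mem_inter.mp hmm).2⟩⟩
      · intro hmem
        obtain ⟨hfe, hmem2⟩ := mem_erase.mp hmem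
        obtain ⟨hfE, hxf⟩ := mem_filter.mp hmem2
        have hfS : f ∈ S := hSmem f hfE hfe ⟨x, mem_inter.mpr ⟨hx, hxf⟩⟩
        exact mem_filter.mpr ⟨hfS, (hm_uniq f hfS x (mem_inter.mpr ⟨hx, hxf⟩)).symm⟩
    rw [hfiber, card_erase_of_mem (mem_filter.mpr ⟨he, hx⟩)]
    rfl
  have hScard : S.card = cliqueRank E e := by
    rw [card_eq_sum_card_fiberwise (fun f hf => mem_of_mem_inter_left (hm_mem f hf))]
    exact Finset.sum_congr rfl hfibcard
  -- ordered pairs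
  set O : Finset (Finset V × Finset V) := ((E.erase e) ×ˢ (E.erase e)).filter
    (fun q => q.1 ≠ q.2 ∧ (e ∩ q.1).Nonempty ∧ (e ∩ q.2).Nonempty ∧ (q.1 ∩ q.2).Nonempty)
    with hOdef
  have hOS : ∀ q ∈ O, q.1 ∈ S ∧ q.2 ∈ S ∧ q.1 ≠ q.2 ∧ (q.1 ∩ q.2).Nonempty := by
    intro q hq
    rw [hOdef, mem_filter, mem_product] at hq
    obtain ⟨⟨h1, h2⟩, hne, he1, he2, h12⟩ := hq
    rw [mem_erase] at h1 h2
    exact ⟨hSmem q.1 h1.2 h1.1 he1, hSmem q.2 h2.2 h2.1 he2, hne, h12⟩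
  set T := ((E.erase e).powersetCard 2).filter (fun p =>
    (∀ f ∈ p, (e ∩ f).Nonempty) ∧ ∀ f ∈ p, ∀ g ∈ p, f ≠ g → (f ∩ g).Nonempty) with hTdef
  have hTnum : numTriangles E e = T.card := rfl
  have hdouble : O.card = 2 * T.card := by
    have hmap : ∀ q ∈ O, ({q.1, q.2} : Finset (Finset V)) ∈ T := by
      intro q hq
      rw [hOdef, mem_filter, mem_product] at hq
      obtain ⟨⟨h1, h2⟩, hne, he1, he2, h12⟩ := hq
      rw [hTdef, mem_filter, mem_powersetCard]
      refine ⟨⟨?_, ?_⟩, ?_, ?_⟩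
      · intro a ha
        simp only [mem_insert, mem_singleton] at ha
        rcases ha with rfl | rfl <;> assumption
      · rw [card_insert_of_notMem (by simpa using hne), card_singleton]
      · intro f hf
        simp only [mem_insert, mem_singleton] at hf
        rcases hf with rfl | rfl <;> assumption
      · intro f hf g hg hfg
        simp only [mem_insert, mem_singleton] at hf hg
        rcases hf with rfl | rfl <;> rcases hg with rfl | rfl
        · exact absurd rfl hfg
        · exact h12
        · rw [inter_comm]; exact h12
        · exact absurd rfl hfg
    rw [card_eq_sum_card_fiberwise hmap]
    have hfib2 : ∀ p ∈ T, (O.filter fun q => ({q.1, q.2} : Finset (Finset V)) = p).card = 2 := by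
      intro p hp
      rw [hTdef, mem_filter, mem_powersetCard] at hp
      obtain ⟨⟨hpsub, hp2⟩, hpe, hppair⟩ := hp
      obtain ⟨f, g, hfg, rfl⟩ := card_eq_two.mp hp2
      have hfE : f ∈ E.erase e := hpsub (by simp)
      have hgE : g ∈ E.erase e := hpsub (by simp)
      have heq : (O.filter fun q => ({q.1, q.2} : Finset (Finset V)) = {f, g})
          = {(f, g), (g, f)} := by
        ext q
        rw [mem_filter, hOdef, mem_filter, mem_product]
        simp only [mem_insert, mem_singleton]
        constructor
        · rintro ⟨⟨⟨hq1, hq2⟩, hne, _, _, _⟩, hpq⟩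
          have h1 : q.1 ∈ ({f, g} : Finset (Finset V)) := by rw [← hpq]; simp
          have h2 : q.2 ∈ ({f, g} : Finset (Finset V)) := by rw [← hpq]; simp
          simp only [mem_insert, mem_singleton] at h1 h2
          rcases h1 with h1 | h1 <;> rcases h2 with h2 | h2
          · exact absurd (h1.trans h2.symm) hne
          · left; exact Prod.ext h1 h2
          · right; exact Prod.ext h1 h2
          · exact absurd (h1.trans h2.symm) hne
        · rintro (rfl | rfl)
          · refine ⟨⟨⟨hfE, hgE⟩, hfg, hpe f (by simp), hpe g (by simp),
              hppair f (by simp) g (by simp) hfg⟩, rfl⟩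
          · refine ⟨⟨⟨hgE, hfE⟩, hfg.symm, hpe g (by simp), hpe f (by simp),
              hppair g (by simp) f (by simp) hfg.symm⟩, ?_⟩
            simp [Finset.pair_comm]
      rw [heq]
      rw [card_insert_of_notMem (by simp [Prod.ext_iff, hfg]), card_singleton]
    rw [Finset.sum_congr rfl hfib2, sum_const, smul_eq_mul, mul_comm]
  -- split O
  have hsplit : (O.filter fun q => m q.1 = m q.2).card
      + (O.filter fun q => ¬ m q.1 = m q.2).card = O.card :=
    card_filter_add_card_filter_not _
  -- bound the same-vertex part
  have hO1 : (O.filter fun q => m q.1 = m q.2).card ≤ ∑ x ∈ e, (deg E x - 1) ^ 2 := by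
    have hmap1 : ∀ q ∈ O.filter (fun q => m q.1 = m q.2), m q.1 ∈ e := fun q hq =>
      mem_of_mem_inter_left (hm_mem q.1 ((hOS q (mem_filter.mp hq).1).1))
    rw [card_eq_sum_card_fiberwise hmap1]
    refine Finset.sum_le_sum fun x hx => ?_
    have hsub : ((O.filter fun q => m q.1 = m q.2).filter (fun q => m q.1 = x)) ⊆
        (S.filter fun f => m f = x) ×ˢ (S.filter fun f => m f = x) := by
      intro q hq
      rw [mem_filter, mem_filter] at hq
      obtain ⟨⟨hqO, hqm⟩, hqx⟩ := hq
      obtain ⟨h1, h2, _, _⟩ := hOS q hqO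
      exact mem_product.mpr ⟨mem_filter.mpr ⟨h1, hqx⟩, mem_filter.mpr ⟨h2, hqm ▸ hqx⟩⟩
    calc ((O.filter fun q => m q.1 = m q.2).filter (fun q => m q.1 = x)).card
        ≤ _ := card_le_card hsub
      _ = (deg E x - 1) ^ 2 := by rw [card_product, hfibcard x hx, sq]
  -- bound the different-vertex part
  set z : Finset V × Finset V → V := fun q => if h : (q.1 ∩ q.2).Nonempty then h.choose else x₀
    with hzdef
  have hkey : ∀ q ∈ O.filter (fun q => ¬ m q.1 = m q.2),
      z q ∈ q.1 ∧ z q ∈ q.2 ∧ z q ∉ e ∧ m q.1 ∈ e ∧ m q.1 ∈ q.1 ∧ m q.1 ∉ q.2 := by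
    intro q hq
    rw [mem_filter] at hq
    obtain ⟨hqO, hqm⟩ := hq
    obtain ⟨h1, h2, hne, h12⟩ := hOS q hqO
    have hz : z q ∈ q.1 ∩ q.2 := by
      simp only [hzdef, dif_pos h12]
      exact h12.choose_spec
    have hz1 : z q ∈ q.1 := (mem_inter.mp hz).1
    have hz2 : z q ∈ q.2 := (mem_inter.mp hz).2
    have hm1 := hm_mem q.1 h1
    refine ⟨hz1, hz2, ?_, (mem_inter.mp hm1).1, (mem_inter.mp hm1).2, ?_⟩
    · intro hze
      have ha : z q = m q.1 := hm_uniq q.1 h1 _ (mem_inter.mpr ⟨hze, hz1⟩)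
      have hb : z q = m q.2 := hm_uniq q.2 h2 _ (mem_inter.mpr ⟨hze, hz2⟩)
      exact hqm (ha ▸ hb)
    · intro hmem
      exact hqm (hm_uniq q.2 h2 _ (mem_inter.mpr ⟨(mem_inter.mp hm1).1, hmem⟩))
  have hO2 : (O.filter fun q => ¬ m q.1 = m q.2).card ≤ S.card * ((r - 1) * (r - 1)) := by
    have hcard : (S.sigma fun g => (g \ e) ×ˢ (e \ g)).card = S.card * ((r - 1) * (r - 1)) := by
      rw [card_sigma]
      have hconst : ∀ g ∈ S, ((g \ e) ×ˢ (e \ g)).card = (r - 1) * (r - 1) := by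
        intro g hg
        have h2 : (e ∩ g).card = 1 := hmeet g hg
        have h1 : (g ∩ e).card = 1 := by rw [inter_comm]; exact h2
        have hgr : g.card = r := hunif g (hSE g hg).1
        have e1 := card_sdiff_add_card_inter g e
        have e2 := card_sdiff_add_card_inter e g
        have c1 : (g \ e).card = r - 1 := by omega
        have c2 : (e \ g).card = r - 1 := by omega
        rw [card_product, c1, c2]
      rw [Finset.sum_congr rfl hconst, sum_const, smul_eq_mul]
    rw [← hcard]
    apply card_le_card_of_injOn (fun q => ⟨q.2, (z q, m q.1)⟩)
    · intro q hq
      obtain ⟨hz1, hz2, hze, hme, hm1, hm2⟩ := hkey q hq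
      rw [mem_coe, mem_filter] at hq
      obtain ⟨h1, h2, _, _⟩ := hOS q hq.1
      rw [mem_coe, mem_sigma, mem_product, mem_sdiff, mem_sdiff]
      exact ⟨h2, ⟨hz2, hze⟩, ⟨hme, hm2⟩⟩
    · intro q hq q' hq' heq
      have hq2 : q.2 = q'.2 := (Sigma.mk.inj_iff.mp heq).1
      have hzx : (z q, m q.1) = (z q', m q'.1) := eq_of_heq (Sigma.mk.inj_iff.mp heq).2
      have hz_eq : z q = z q' := congrArg Prod.fst hzx
      have hm_eq : m q.1 = m q'.1 := congrArg Prod.snd hzx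
      have hqm := mem_coe.mp hq
      have hqm' := mem_coe.mp hq'
      obtain ⟨hz1, hz2, hze, hme, hm1, _⟩ := hkey q hqm
      obtain ⟨hz1', hz2', hze', hme', hm1', _⟩ := hkey q' hqm'
      have h1E : q.1 ∈ E := (hSE q.1 (hOS q (mem_filter.mp hqm).1).1).1
      have h1E' : q'.1 ∈ E := (hSE q'.1 (hOS q' (mem_filter.mp hqm').1).1).1
      have hfst : q.1 = q'.1 := by
        by_contra hne
        have hmz : m q.1 ≠ z q := fun h => hze (h ▸ hme)
        have hsub : ({m q.1, z q} : Finset V) ⊆ q.1 ∩ q'.1 := by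
          intro a ha
          simp only [mem_insert, mem_singleton] at ha
          rcases ha with rfl | rfl
          · exact mem_inter.mpr ⟨hm1, hm_eq ▸ hm1'⟩
          · exact mem_inter.mpr ⟨hz1, hz_eq ▸ hz1'⟩
        have hc2 : ({m q.1, z q} : Finset V).card = 2 := by
          rw [card_insert_of_notMem (by simpa using hmz), card_singleton]
        have := card_le_card hsub
        have := hlin q.1 h1E q'.1 h1E' hne
        omega
      exact Prod.ext hfst hq2
  -- put everything together over ℝ
  have hdball : ∀ x : V, ((deg E x - 1 : ℕ) : ℝ) ≤ (R : ℝ) / r := by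
    intro x
    rcases Nat.eq_zero_or_pos (deg E x) with h | h
    · simp [h]; positivity
    · have hc : ((deg E x - 1 : ℕ) : ℝ) = (deg E x : ℝ) - 1 := by
        rw [Nat.cast_sub h]; norm_num
      rw [hc]; linarith [hdeg x]
  have hcrank : (∑ x ∈ e, ((deg E x - 1 : ℕ) : ℝ)) ≤ (R : ℝ) := by
    have : (∑ x ∈ e, ((deg E x - 1 : ℕ) : ℝ)) = ((cliqueRank E e : ℕ) : ℝ) := by
      rw [cliqueRank, Nat.cast_sum]
    rw [this]
    exact_mod_cast hR e he
  have hsum1 : ((∑ x ∈ e, (deg E x - 1) ^ 2 : ℕ) : ℝ) ≤ (R : ℝ) / r * R := by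
    rw [Nat.cast_sum]
    calc ∑ x ∈ e, (((deg E x - 1) ^ 2 : ℕ) : ℝ)
        ≤ ∑ x ∈ e, (R : ℝ) / r * ((deg E x - 1 : ℕ) : ℝ) := by
          apply Finset.sum_le_sum
          intro x hx
          have h0 : (0 : ℝ) ≤ ((deg E x - 1 : ℕ) : ℝ) := Nat.cast_nonneg _
          have := hdball x
          push_cast
          nlinarith
      _ = (R : ℝ) / r * ∑ x ∈ e, ((deg E x - 1 : ℕ) : ℝ) := by rw [mul_sum]
      _ ≤ (R : ℝ) / r * R := by
          apply mul_le_mul_of_nonneg_left hcrank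
          positivity
  have hO2R : ((O.filter fun q => ¬ m q.1 = m q.2).card : ℝ) ≤ (R : ℝ) * ((r : ℝ) - 1) ^ 2 := by
    have h1 : (O.filter fun q => ¬ m q.1 = m q.2).card ≤ R * ((r - 1) * (r - 1)) := by
      calc (O.filter fun q => ¬ m q.1 = m q.2).card ≤ S.card * ((r - 1) * (r - 1)) := hO2
        _ ≤ R * ((r - 1) * (r - 1)) := by
            apply Nat.mul_le_mul_right
            rw [hScard]; exact hR e he
    calc ((O.filter fun q => ¬ m q.1 = m q.2).card : ℝ)
        ≤ ((R * ((r - 1) * (r - 1)) : ℕ) : ℝ) := Nat.cast_le.mpr h1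
      _ = (R : ℝ) * ((r : ℝ) - 1) ^ 2 := by
          rw [Nat.cast_mul, Nat.cast_mul, Nat.cast_sub (by omega : 1 ≤ r)]
          push_cast
          ring
  have h2T : 2 * (numTriangles E e : ℝ) ≤ (R : ℝ) / r * R + (R : ℝ) * ((r : ℝ) - 1) ^ 2 := by
    have hOcard : (O.card : ℝ) = 2 * (numTriangles E e : ℝ) := by
      rw [hTnum, hdouble]; push_cast; ring
    rw [← hOcard, ← hsplit, Nat.cast_add]
    have hO1R : ((O.filter fun q => m q.1 = m q.2).card : ℝ) ≤ (R : ℝ) / r * R :=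
      le_trans (Nat.cast_le.mpr hO1) hsum1
    linarith
  rcases Nat.eq_zero_or_pos R with hR0 | hR0
  · subst hR0
    have hrhs0 : ((0 : ℕ) : ℝ) ^ 2 / 2 * (1 / r + ((r : ℝ) - 1) ^ 2 / ((0 : ℕ) : ℝ)) = 0 := by
      norm_num
    rw [hrhs0]
    have h0 : (((0 : ℕ) : ℝ)) / r * ((0 : ℕ) : ℝ) + (((0 : ℕ) : ℝ)) * ((r : ℝ) - 1) ^ 2 = 0 := by
      norm_num
    rw [h0] at h2T
    linarith
  · have hRpos : (0 : ℝ) < R := by exact_mod_cast hR0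
    have hrR : (0 : ℝ) < r := by exact_mod_cast hrpos
    have hrhs : (R : ℝ) ^ 2 / 2 * (1 / r + ((r : ℝ) - 1) ^ 2 / R)
        = ((R : ℝ) / r * R + (R : ℝ) * ((r : ℝ) - 1) ^ 2) / 2 := by
      field_simp
    rw [hrhs]
    linarith
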